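/- Let ϑ be a primitive, compatible random substitution of constant length ℓ with disjoint images. If there exists a legal word v of length ℓ with v ∉ ϑ(𝒜) such that v appears as a subword of every element of X_ϑ, then X_ϑ contains no periodic points. -/

import Mathlib

open List

variable {A : Type*}

/-- Extension of a random substitution to words, by concatenation. -/
def substWord (θ : A → Set (List A)) : List A → Set (List A)
  | [] => {[]}
  | a :: u => {w | ∃ x ∈ θ a, ∃ y ∈ substWord θ u, w = x ++ y}

/-- The set of realisations of `θ^k` on a word. -/
def substPowWord (θ : A → Set (List A)) : ℕ → List A → Set (List A)
  | 0, u => {u}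
  | (k+1), u => ⋃ v ∈ substPowWord θ k u, substWord θ v

/-- The power `θ^k` as a random substitution. -/
def powSub (θ : A → Set (List A)) (k : ℕ) : A → Set (List A) :=
  fun a => substPowWord θ k [a]

/-- `θ` is a (finite range) random substitution: every letter has a nonempty
finite set of realisations, all of which are nonempty words. -/
def RandomSubstitution (θ : A → Set (List A)) : Prop :=
  ∀ a : A, (θ a).Nonempty ∧ (θ a).Finite ∧ ∀ w ∈ θ a, w ≠ []

/-- A word is `θ`-legal if it is a subword of a realisation of some power of
`θ` on some letter. -/
def IsLegal (θ : A → Set (List A)) (u : List A) : Prop :=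
  ∃ k : ℕ, ∃ a : A, ∃ w ∈ substPowWord θ k [a], u <:+: w

/-- `θ` has disjoint images. -/
def HasDisjointImages (θ : A → Set (List A)) : Prop :=
  ∀ u v : List A, IsLegal θ u → IsLegal θ v →
    (substWord θ u ∩ substWord θ v).Nonempty → u = v

/-- `θ` has constant length `ℓ`. -/
def ConstantLength (θ : A → Set (List A)) (ℓ : ℕ) : Prop :=
  ∀ a : A, ∀ w ∈ θ a, w.length = ℓ

/-- `θ` is compatible: abelianisations of realisations are well defined. -/
def Compatible [DecidableEq A] (θ : A → Set (List A)) : Prop :=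
  ∀ a : A, ∀ u ∈ θ a, ∀ v ∈ θ a, ∀ b : A, u.count b = v.count b

/-- `θ` is primitive. -/
def Primitive (θ : A → Set (List A)) : Prop :=
  ∃ k : ℕ, ∀ a b : A, ∃ w ∈ substPowWord θ k [a], b ∈ w

/-- The finite subword of a bi-infinite sequence starting at `i`, of length `n`. -/
def extract (x : ℤ → A) (i : ℤ) (n : ℕ) : List A :=
  (List.range n).map fun j => x (i + j)

/-- The RS-subshift of `θ`: bi-infinite sequences all of whose subwords are legal. -/
def Subshift (θ : A → Set (List A)) : Set (ℤ → A) :=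
  {x | ∀ i : ℤ, ∀ n : ℕ, IsLegal θ (extract x i n)}

/-- `x` is a realisation-wise image of `y` under `θ`: there is a decomposition
of `x` into consecutive inflation words, with a cut at the origin, the `n`-th
of which is a realisation of `θ` on `y n`. -/
def SeqImage (θ : A → Set (List A)) (y x : ℤ → A) : Prop :=
  ∃ c : ℤ → ℤ, c 0 = 0 ∧ (∀ n : ℤ, c n < c (n + 1)) ∧
    ∀ n : ℤ, extract x (c n) (c (n + 1) - c n).toNat ∈ θ (y n)

/-- `θ` is globally uniquely recognisable. -/
def GloballyUniquelyRecognisable (θ : A → Set (List A)) : Prop :=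
  ∀ x ∈ Subshift θ, ∃! y : ℤ → A, y ∈ Subshift θ ∧
    ∃ k : ℕ, (∃ w ∈ θ (y 0), k < w.length) ∧ SeqImage θ y (fun n => x (n - k))

/-- `x` has period `p` (as a natural number, acting on indices in `ℤ`). -/
def HasPeriod (x : ℤ → A) (p : ℕ) : Prop :=
  ∀ n : ℤ, x (n + p) = x n

/-- `x` is shift-periodic. -/
def IsPeriodic (x : ℤ → A) : Prop :=
  ∃ p : ℕ, 0 < p ∧ HasPeriod x p

/-- `p` is the prime (least) period of `x`. -/
def PrimePeriod (x : ℤ → A) (p : ℕ) : Prop :=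
  0 < p ∧ HasPeriod x p ∧ ∀ q : ℕ, 0 < q → HasPeriod x q → p ≤ q

/-- `u` is a periodic block for `x`: up to shift, `x` is the bi-infinite
repetition of `u`. -/
def PeriodicBlock (u : List A) (x : ℤ → A) : Prop :=
  u ≠ [] ∧ ∃ i : ℤ, ∀ n : ℤ, extract x (i + n * u.length) u.length = u

-- ==== aux ====
section Aux
variable {θ : A → Set (List A)} {ℓ : ℕ}

theorem extract_eq (x : ℤ → A) (i : ℤ) (n : ℕ) :
    extract x i n = (List.range n).map (fun j : ℕ => x (i + (j:ℤ))) := by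
  unfold _root_.extract
  simp [List.map_flatMap]
  induction (List.range n) with
  | nil => rfl
  | cons a l ih => simp_all

theorem extract_length (x : ℤ → A) (i : ℤ) (n : ℕ) : (extract x i n).length = n := by
  rw [extract_eq, List.length_map, List.length_range]

theorem extract_getElem? (x : ℤ → A) (i : ℤ) (n t : ℕ) :
    (extract x i n)[t]? = if t < n then some (x (i + t)) else none := by
  by_cases h : t < n
  · rw [extract_eq, List.getElem?_map, List.getElem?_range h, if_pos h]; rfl
  · have h2 : (extract x i n).length ≤ t := by rw [extract_length]; omega
    simp [List.getElem?_eq_none h2, h]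

def PeriodicList (u : List A) (q : ℕ) : Prop :=
  ∀ t : ℕ, t + q < u.length → u[t + q]? = u[t]?

theorem PeriodicList.add_mul {u : List A} {q : ℕ} (hu : PeriodicList u q) :
    ∀ (k t : ℕ), t + k * q < u.length → u[t + k * q]? = u[t]? := by
  intro k
  induction k with
  | zero => simp
  | succ k ih =>
    intro t ht
    have h1 : t + (k+1)*q = (t + k*q) + q := by ring
    have h2 : k * q ≤ (k+1) * q := Nat.mul_le_mul_right _ (by omega)
    rw [h1, hu _ (by omega)]
    exact ih t (by omega)

theorem per_getElem? {u : List A} {q : ℕ} (hq : 0 < q) (hu : PeriodicList u q) :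
    ∀ t, t < u.length → u[t]? = u[t % q]? := by
  intro t
  induction t using Nat.strong_induction_on with
  | _ t ih =>
    intro ht
    by_cases h : t < q
    · rw [Nat.mod_eq_of_lt h]
    · push_neg at h
      have h1 : t - q + q = t := by omega
      have h2 := hu (t - q) (by omega)
      rw [h1] at h2
      rw [h2, ih (t - q) (by omega) (by omega), Nat.mod_eq_sub_mod h]

theorem substWord_blocks (hℓ : ConstantLength θ ℓ) :
    ∀ (w z : List A), z ∈ substWord θ w →
      z.length = w.length * ℓ ∧
      ∀ m (hm : m < w.length), (z.drop (m * ℓ)).take ℓ ∈ θ (w[m]'hm) := by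
  intro w
  induction w with
  | nil =>
    intro z hz
    simp only [substWord, Set.mem_singleton_iff] at hz
    subst hz; simp
  | cons a w ih =>
    intro z hz
    simp only [substWord, Set.mem_setOf_eq] at hz
    obtain ⟨xp, hxp, y, hy, rfl⟩ := hz
    have hxl : xp.length = ℓ := hℓ a xp hxp
    obtain ⟨hyl, hyb⟩ := ih y hy
    constructor
    · simp [hxl, hyl]; ring
    · intro m hm
      cases m with
      | zero =>
        simpa [List.take_left' hxl] using hxp
      | succ m =>
        have h1 : (m+1) * ℓ = xp.length + m * ℓ := by rw [hxl]; ring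
        rw [h1, List.drop_length_add_append]
        simpa using hyb m (by simpa using hm)

end Aux

section Aux2
variable {θ : A → Set (List A)} {ℓ : ℕ}

theorem isLegal_infix {u w : List A} (h : u <:+: w) (hw : IsLegal θ w) : IsLegal θ u := by
  obtain ⟨k, a, z, hz, hwz⟩ := hw
  exact ⟨k, a, z, hz, h.trans hwz⟩

theorem isLegal_mem {w : List A} (hw : IsLegal θ w) {b : A} (hb : b ∈ w) : IsLegal θ [b] := by
  obtain ⟨s, t, hst⟩ := List.append_of_mem hb
  exact isLegal_infix ⟨s, t, by rw [hst]; simp⟩ hw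

theorem letter_eq (hd : HasDisjointImages θ) {b c : A} (hb : IsLegal θ [b]) (hc : IsLegal θ [c])
    {B : List A} (h1 : B ∈ θ b) (h2 : B ∈ θ c) : b = c := by
  have hmem : ∀ {e : A}, B ∈ θ e → B ∈ substWord θ [e] := by
    intro e he
    exact ⟨B, he, [], rfl, by simp⟩
  have := hd [b] [c] hb hc ⟨B, hmem h1, hmem h2⟩
  simpa using this

theorem legal_cover (hθ : RandomSubstitution θ) (hprim : Primitive θ) {u : List A}
    (hu : IsLegal θ u) : ∃ w z, IsLegal θ w ∧ z ∈ substWord θ w ∧ u <:+: z := by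
  have hletter : ∀ b : A, ∃ w z, IsLegal θ w ∧ z ∈ substWord θ w ∧ [b] <:+: z := by
    intro b
    obtain ⟨k, hk⟩ := hprim
    cases k with
    | zero =>
      have hsub : ∀ e d : A, d = e := by
        intro e d
        obtain ⟨w, hw, hdw⟩ := hk e d
        simp only [substPowWord, Set.mem_singleton_iff] at hw
        subst hw; simpa using hdw
      obtain ⟨z₀, hz₀⟩ := (hθ b).1
      have hzne := (hθ b).2.2 z₀ hz₀
      refine ⟨[b], z₀, ⟨0, b, [b], rfl, List.infix_rfl⟩, ⟨z₀, hz₀, [], rfl, by simp⟩, ?_⟩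
      cases z₀ with
      | nil => exact absurd rfl hzne
      | cons e t =>
        rw [hsub e b]
        exact ⟨[], t, by simp⟩
    | succ k =>
      obtain ⟨w, hw, hbw⟩ := hk b b
      simp only [substPowWord, Set.mem_iUnion] at hw
      obtain ⟨v, hv, hwv⟩ := hw
      obtain ⟨s, t, hst⟩ := List.append_of_mem hbw
      exact ⟨v, w, ⟨k, b, v, hv, List.infix_rfl⟩, hwv, ⟨s, t, by rw [hst]; simp⟩⟩
  obtain ⟨k, a, z0, hz0, huz⟩ := hu
  cases k with
  | zero =>
    simp only [substPowWord, Set.mem_singleton_iff] at hz0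
    subst hz0
    rcases List.sublist_singleton.mp huz.sublist with h | h
    · subst h
      obtain ⟨w, z, h1, h2, _⟩ := hletter a
      exact ⟨w, z, h1, h2, List.nil_infix⟩
    · subst h
      exact hletter a
  | succ k =>
    simp only [substPowWord, Set.mem_iUnion] at hz0
    obtain ⟨v, hv, hzv⟩ := hz0
    exact ⟨v, z0, ⟨k, a, v, hv, List.infix_rfl⟩, hzv, huz⟩

theorem cover_blocks (hℓ : ConstantLength θ ℓ) (hℓpos : 0 < ℓ) {u z w s t : List A}
    (hz : z ∈ substWord θ w) (hst : s ++ u ++ t = z) (m : ℕ)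
    (hm1 : s.length ≤ m * ℓ) (hm2 : m * ℓ + ℓ ≤ s.length + u.length) :
    ∃ hmw : m < w.length, (u.drop (m * ℓ - s.length)).take ℓ ∈ θ (w[m]'hmw) := by
  obtain ⟨hzl, hblocks⟩ := substWord_blocks hℓ w z hz
  have hzlen : s.length + u.length ≤ z.length := by
    rw [← hst]; simp
  have hmw : m < w.length := by
    have h2 : (m+1) * ℓ ≤ w.length * ℓ := by
      have e1 : (m+1)*ℓ = m*ℓ + ℓ := by ring
      omega
    have := Nat.le_of_mul_le_mul_right h2 hℓpos
    omega
  refine ⟨hmw, ?_⟩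
  have hB := hblocks m hmw
  have heq : (z.drop (m*ℓ)).take ℓ = (u.drop (m*ℓ - s.length)).take ℓ := by
    apply List.ext_getElem?
    intro t'
    rw [List.getElem?_take, List.getElem?_take]
    by_cases ht' : t' < ℓ
    · rw [if_pos ht', if_pos ht', List.getElem?_drop, List.getElem?_drop, ← hst]
      have h3 : m * ℓ + t' = s.length + (m*ℓ - s.length + t') := by omega
      rw [h3]
      rw [List.getElem?_append_left (by simp; omega),
          List.getElem?_append_right (by omega : s.length ≤ s.length + (m*ℓ - s.length + t'))]
      congr 1
      omega
    · rw [if_neg ht', if_neg ht']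
  rw [← heq]
  exact hB

end Aux2

section Aux3
variable {θ : A → Set (List A)} {ℓ : ℕ}

theorem descent_step (hθ : RandomSubstitution θ) (hprim : Primitive θ)
    (hd : HasDisjointImages θ) (hℓ : ConstantLength θ ℓ) (hℓpos : 0 < ℓ)
    {q : ℕ} (hq : 0 < q)
    (hP : ∀ n, ∃ u, IsLegal θ u ∧ u.length = n ∧ PeriodicList u q) :
    ∀ n, ∃ u, IsLegal θ u ∧ u.length = n ∧ PeriodicList u (q / Nat.gcd q ℓ) := by
  intro n
  set d := Nat.gcd q ℓ with hdq
  have hdpos : 0 < d := Nat.gcd_pos_of_pos_left ℓ hq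
  obtain ⟨q₁, hq₁⟩ := Nat.gcd_dvd_left q ℓ
  obtain ⟨ℓ₁, hℓ₁⟩ := Nat.gcd_dvd_right q ℓ
  have hq' : q / d = q₁ := by rw [hq₁]; exact Nat.mul_div_cancel_left _ hdpos
  have hkey : q₁ * ℓ = ℓ₁ * q := by
    conv_lhs => rw [hℓ₁]
    conv_rhs => rw [hq₁]
    ring
  obtain ⟨u, huleg, hulen, huper⟩ := hP ((n+1) * ℓ)
  obtain ⟨w, z, hwleg, hz, huz⟩ := legal_cover hθ hprim huleg
  obtain ⟨s, t, hst⟩ := huz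
  set o := s.length with ho
  set m₀ := o / ℓ + 1 with hm₀
  have hom : o < m₀ * ℓ ∧ m₀ * ℓ ≤ o + ℓ := by
    have h1 := Nat.div_mul_le_self o ℓ
    have h2 : o % ℓ < ℓ := Nat.mod_lt _ hℓpos
    have h3 := Nat.div_add_mod o ℓ
    have h4 : m₀ * ℓ = o/ℓ * ℓ + ℓ := by rw [hm₀]; ring
    have h5 : ℓ * (o/ℓ) = o/ℓ * ℓ := Nat.mul_comm _ _
    omega
  have hfull : ∀ j, j + 1 ≤ n → (m₀ + j) * ℓ + ℓ ≤ o + u.length := by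
    intro j hj
    have h1 : (m₀ + j) * ℓ = m₀ * ℓ + j * ℓ := by ring
    have h2 : (j + 2) * ℓ ≤ (n + 1) * ℓ := Nat.mul_le_mul_right _ (by omega)
    have h3 : (j+2)*ℓ = j*ℓ + 2*ℓ := by ring
    have h4 : 2*ℓ = ℓ + ℓ := by ring
    omega
  have hblock : ∀ j, j + 1 ≤ n → ∃ hmw : m₀ + j < w.length,
      (u.drop ((m₀ + j) * ℓ - o)).take ℓ ∈ θ (w[m₀ + j]'hmw) := by
    intro j hj
    have hmo : m₀ * ℓ ≤ (m₀ + j) * ℓ := Nat.mul_le_mul_right _ (by omega)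
    exact cover_blocks hℓ hℓpos hz hst (m₀ + j) (by omega) (hfull j hj)
  have hwlen : m₀ + n ≤ w.length := by
    have hzl := (substWord_blocks hℓ w z hz).1
    have hzlen : o + u.length ≤ z.length := by rw [← hst]; simp [ho]
    have h2 : (m₀ + n) * ℓ ≤ w.length * ℓ := by
      have e1 : (m₀ + n)*ℓ = m₀*ℓ + n*ℓ := by ring
      have e2 : (n+1)*ℓ = n*ℓ + ℓ := by ring
      omega
    exact Nat.le_of_mul_le_mul_right h2 hℓpos
  refine ⟨(w.drop m₀).take n, ?_, ?_, ?_⟩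
  · exact isLegal_infix ((List.take_prefix n _).isInfix.trans (List.drop_suffix m₀ _).isInfix) hwleg
  · rw [List.length_take, List.length_drop]; omega
  · rw [hq']
    intro j hj
    rw [List.length_take, List.length_drop] at hj
    have hjn : j + q₁ < n := by omega
    rw [List.getElem?_take, List.getElem?_take, if_pos (by omega), if_pos (by omega),
        List.getElem?_drop, List.getElem?_drop]
    obtain ⟨hw1, hB1⟩ := hblock j (by omega)
    obtain ⟨hw2, hB2⟩ := hblock (j + q₁) (by omega)
    have hmo1 : o ≤ (m₀ + j) * ℓ := by
      have := Nat.mul_le_mul_right ℓ (Nat.le_add_right m₀ j)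
      omega
    have ha2 : (m₀ + (j + q₁)) * ℓ - o = ((m₀ + j) * ℓ - o) + ℓ₁ * q := by
      have e1 : (m₀ + (j+q₁))*ℓ = (m₀+j)*ℓ + q₁*ℓ := by ring
      omega
    have hfull2 := hfull (j + q₁) (by omega)
    have hBeq : (u.drop ((m₀ + (j + q₁)) * ℓ - o)).take ℓ = (u.drop ((m₀ + j) * ℓ - o)).take ℓ := by
      apply List.ext_getElem?
      intro t'
      rw [List.getElem?_take, List.getElem?_take]
      by_cases ht' : t' < ℓ
      · rw [if_pos ht', if_pos ht', List.getElem?_drop, List.getElem?_drop, ha2]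
        have e3 : ((m₀+j)*ℓ - o) + ℓ₁*q + t' = (((m₀+j)*ℓ - o) + t') + ℓ₁*q := by omega
        have hlt : (((m₀+j)*ℓ - o) + t') + ℓ₁*q < u.length := by
          have e4 : (m₀ + (j+q₁))*ℓ = (m₀+j)*ℓ + q₁*ℓ := by ring
          omega
        rw [e3, huper.add_mul ℓ₁ _ hlt]
      · rw [if_neg ht', if_neg ht']
    have hB2' := hB2
    rw [hBeq] at hB2'
    have hlet : w[m₀ + (j + q₁)]'hw2 = w[m₀ + j]'hw1 :=
      letter_eq hd (isLegal_mem hwleg (List.getElem_mem _))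
        (isLegal_mem hwleg (List.getElem_mem _)) hB2' hB1
    rw [List.getElem?_eq_getElem hw2, List.getElem?_eq_getElem hw1, hlet]

theorem descent (hθ : RandomSubstitution θ) (hprim : Primitive θ)
    (hd : HasDisjointImages θ) (hℓ : ConstantLength θ ℓ) (hℓpos : 0 < ℓ) :
    ∀ q, 0 < q → (∀ n, ∃ u, IsLegal θ u ∧ u.length = n ∧ PeriodicList u q) →
    ∃ q', 0 < q' ∧ Nat.Coprime q' ℓ ∧
      ∀ n, ∃ u, IsLegal θ u ∧ u.length = n ∧ PeriodicList u q' := by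
  intro q
  induction q using Nat.strong_induction_on with
  | _ q ih =>
    intro hq hP
    by_cases hcop : Nat.Coprime q ℓ
    · exact ⟨q, hq, hcop, hP⟩
    · have hgpos : 0 < Nat.gcd q ℓ := Nat.gcd_pos_of_pos_left ℓ hq
      have hd2 : 2 ≤ Nat.gcd q ℓ := by
        have : Nat.gcd q ℓ ≠ 1 := fun h => hcop h
        omega
      have h1 : q / Nat.gcd q ℓ < q := Nat.div_lt_self hq hd2
      have h2 : 0 < q / Nat.gcd q ℓ :=
        Nat.div_pos (Nat.le_of_dvd hq (Nat.gcd_dvd_left q ℓ)) (by omega)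
      exact ih _ h1 h2 (descent_step hθ hprim hd hℓ hℓpos hq hP)

theorem substWord_finite (hθ : RandomSubstitution θ) : ∀ u : List A, (substWord θ u).Finite := by
  intro u
  induction u with
  | nil => exact Set.finite_singleton _
  | cons a u ih =>
    have he : substWord θ (a :: u) = Set.image2 (· ++ ·) (θ a) (substWord θ u) := by
      ext w
      simp only [substWord, Set.mem_setOf_eq, Set.mem_image2]
      constructor
      · rintro ⟨x, hx, y, hy, rfl⟩; exact ⟨x, hx, y, hy, rfl⟩
      · rintro ⟨x, hx, y, hy, rfl⟩; exact ⟨x, hx, y, hy, rfl⟩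
    rw [he]
    exact Set.Finite.image2 _ ((hθ a).2.1) ih

theorem substPowWord_finite (hθ : RandomSubstitution θ) :
    ∀ (k : ℕ) (u : List A), (substPowWord θ k u).Finite := by
  intro k
  induction k with
  | zero => intro u; exact Set.finite_singleton _
  | succ k ih => intro u; exact (ih u).biUnion (fun v _ => substWord_finite hθ v)

theorem finite_of_primitive (hθ : RandomSubstitution θ) (hprim : Primitive θ) (a₀ : A) :
    Finite A := by
  obtain ⟨k, hk⟩ := hprim
  have hfin : (Set.univ : Set A).Finite := by
    apply Set.Finite.subset ((substPowWord_finite hθ k [a₀]).biUnion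
      (fun w _ => w.finite_toSet))
    intro b _
    obtain ⟨w, hw, hbw⟩ := hk a₀ b
    exact Set.mem_biUnion hw hbw
  exact Set.finite_univ_iff.mp hfin

end Aux3





theorem hasPeriod_mul {x : ℤ → A} {q : ℕ} (hx : HasPeriod x q) (j : ℕ) (n : ℤ) :
    x (n + (j * q : ℕ)) = x n := by
  induction j with
  | zero => simp
  | succ j ih =>
    rw [show (n + ((j+1) * q : ℕ) : ℤ) = (n + (j * q : ℕ)) + (q : ℕ) by push_cast; ring,
        hx, ih]


/-- a primitive compatible constant-length substitution with
disjoint images admitting an unavoidable non-inflation legal word of length `ℓ`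
has no periodic points in its subshift. -/
theorem no_periodic_points [DecidableEq A]
    (θ : A → Set (List A)) (hθ : RandomSubstitution θ)
    (hc : Compatible θ) (hprim : Primitive θ)
    (ℓ : ℕ) (hℓ : ConstantLength θ ℓ) (hd : HasDisjointImages θ)
    (v : List A) (hv : IsLegal θ v) (hvlen : v.length = ℓ)
    (hvnot : ∀ a : A, v ∉ θ a)
    (hunavoid : ∀ x ∈ Subshift θ, ∃ i : ℤ, extract x i ℓ = v) :
    ∀ x ∈ Subshift θ, ¬ IsPeriodic x := by
  intro x hx hper
  obtain ⟨p, hp, hxp⟩ := hper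
  have hℓpos : 0 < ℓ := by
    rcases (hθ (x 0)).1 with ⟨w0, hw0⟩
    have h1 := hℓ _ _ hw0
    have h2 := (hθ (x 0)).2.2 _ hw0
    rcases Nat.eq_zero_or_pos ℓ with h | h
    · rw [h] at h1
      exact absurd (List.length_eq_zero_iff.mp h1) h2
    · exact h
  haveI : Finite A := finite_of_primitive hθ hprim (x 0)
  -- initial family of periodic legal words
  have hP0 : ∀ n, ∃ u, IsLegal θ u ∧ u.length = n ∧ PeriodicList u p := by
    intro n
    refine ⟨extract x 0 n, hx 0 n, extract_length x 0 n, ?_⟩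
    intro t ht
    rw [extract_length] at ht
    rw [extract_getElem?, extract_getElem?, if_pos (by omega), if_pos (by omega)]
    congr 1
    rw [show ((0:ℤ) + ((t + p : ℕ) : ℤ)) = ((t:ℤ) + (p:ℕ)) by push_cast; ring, hxp ((t:ℤ))]
    congr 1
    push_cast; ring
  obtain ⟨q, hqpos, hqcop, hQ⟩ := descent hθ hprim hd hℓ hℓpos p hp hP0
  choose u huleg hulen huper using hQ
  have hqlt : ∀ (n : ℕ) (t : Fin q), (t : ℕ) < (u (n + q)).length := by
    intro n t
    rw [hulen]
    omega
  let pat : ℕ → (Fin q → A) := fun n t => (u (n + q))[(t:ℕ)]'(hqlt n t)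
  obtain ⟨c, hcfib⟩ := Finite.exists_infinite_fiber pat
  have hcinf : (pat ⁻¹' {c}).Infinite := Set.infinite_coe_iff.mp hcfib
  have hmodlt : ∀ j : ℤ, (j % (q:ℤ)).toNat < q := by
    intro j
    have h1 := Int.emod_nonneg j (by exact_mod_cast hqpos.ne' : (q:ℤ) ≠ 0)
    have h2 := Int.emod_lt_of_pos j (by exact_mod_cast hqpos : (0:ℤ) < (q:ℤ))
    omega
  set x' : ℤ → A := fun j => c ⟨(j % (q:ℤ)).toNat, hmodlt j⟩ with hx'def
  -- words in the fiber follow the pattern c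
  have hfib : ∀ N, pat N = c → ∀ t, t < N + q →
      (u (N + q))[t]? = some (c ⟨t % q, Nat.mod_lt t hqpos⟩) := by
    intro N hN t ht
    have hlen : t < (u (N+q)).length := by rw [hulen]; omega
    rw [per_getElem? hqpos (huper (N+q)) t hlen]
    have hmlt : t % q < (u (N+q)).length := by
      rw [hulen]
      have := Nat.mod_lt t hqpos
      omega
    rw [List.getElem?_eq_getElem hmlt]
    rw [← hN]
  -- x' belongs to the subshift
  have hx'mem : x' ∈ Subshift θ := by
    intro i n
    set s := ((i % (q:ℤ)).toNat) with hs
    have hslt : s < q := hmodlt i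
    obtain ⟨N, hNfib, hNgt⟩ := hcinf.exists_gt (s + n)
    have hNc : pat N = c := hNfib
    have hkey : extract x' i n = ((u (N + q)).drop s).take n := by
      apply List.ext_getElem?
      intro t
      rw [extract_getElem?, List.getElem?_take]
      by_cases ht : t < n
      · rw [if_pos ht, if_pos ht, List.getElem?_drop, hfib N hNc (s + t) (by omega)]
        have hval : ((i + (t:ℤ)) % (q:ℤ)).toNat = (s + t) % q := by
          have hnn : 0 ≤ i % (q:ℤ) := Int.emod_nonneg i (by exact_mod_cast hqpos.ne')
          have h1 : (i % (q:ℤ)) = (s : ℤ) := by omega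
          have h3 : ((s:ℤ) + (t:ℤ)) % (q:ℤ) = ((((s + t) % q : ℕ)) : ℤ) := by
            rw [show ((s:ℤ) + (t:ℤ)) = ((s + t : ℕ) : ℤ) by push_cast; ring]
            exact (Int.natCast_mod _ _).symm
          have h4 : (s:ℤ) % (q:ℤ) = (s:ℤ) :=
            Int.emod_eq_of_lt (by positivity) (by exact_mod_cast hslt)
          have h2 : (i + (t:ℤ)) % (q:ℤ) = ((s:ℤ) + (t:ℤ)) % (q:ℤ) := by
            conv_lhs => rw [Int.add_emod]
            conv_rhs => rw [Int.add_emod]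
            rw [h1, h4]
          rw [h2, h3]
          omega
        simp only [hx'def]
        have hfin2 : (⟨((i + (t:ℤ)) % (q:ℤ)).toNat, hmodlt _⟩ : Fin q)
            = ⟨(s + t) % q, Nat.mod_lt _ hqpos⟩ := Fin.ext hval
        rw [hfin2]
      · rw [if_neg ht, if_neg ht]
    rw [hkey]
    exact isLegal_infix ((List.take_prefix n _).isInfix.trans
      (List.drop_suffix s _).isInfix) (huleg (N + q))
  -- x' is q-periodic
  have hx'per : HasPeriod x' q := by
    intro n
    simp only [hx'def]
    congr 1
    apply Fin.ext
    show ((n + (q:ℤ)) % (q:ℤ)).toNat = (n % (q:ℤ)).toNat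
    rw [show n + (q:ℤ) = n + 1 * (q:ℤ) by ring, Int.add_mul_emod_self_right]
  obtain ⟨i₀, hi₀⟩ := hunavoid x' hx'mem
  have hvocc : ∀ j : ℕ, extract x' (i₀ + ((j * q : ℕ) : ℤ)) ℓ = v := by
    intro j
    rw [← hi₀]
    apply List.ext_getElem?
    intro t
    rw [extract_getElem?, extract_getElem?]
    by_cases ht : t < ℓ
    · rw [if_pos ht, if_pos ht]
      congr 1
      rw [show (i₀ + ((j * q : ℕ) : ℤ) + (t : ℤ)) = (i₀ + (t:ℤ)) + ((j * q : ℕ) : ℤ) by ring,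
          hasPeriod_mul hx'per j]
    · rw [if_neg ht, if_neg ht]
  -- the big window
  set Nb := ℓ * q + 2 * ℓ with hNb
  obtain ⟨w, z, hwleg, hz, hinf⟩ := legal_cover hθ hprim (hx'mem i₀ Nb)
  obtain ⟨s, t, hst⟩ := hinf
  set o := s.length with ho
  haveI : NeZero ℓ := ⟨hℓpos.ne'⟩
  obtain ⟨j, hjℓ, hdvd⟩ : ∃ j, j < ℓ ∧ ℓ ∣ (o + j * q) := by
    refine ⟨((-(o : ZMod ℓ)) * (q : ZMod ℓ)⁻¹).val, ZMod.val_lt _, ?_⟩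
    have hcast : ((o + ((-(o : ZMod ℓ)) * (q : ZMod ℓ)⁻¹).val * q : ℕ) : ZMod ℓ) = 0 := by
      push_cast
      rw [ZMod.natCast_val, ZMod.cast_id]
      have hqi : (q : ZMod ℓ) * (q : ZMod ℓ)⁻¹ = 1 := ZMod.coe_mul_inv_eq_one q hqcop
      calc ((o : ZMod ℓ)) + -(o : ZMod ℓ) * (q : ZMod ℓ)⁻¹ * (q : ZMod ℓ)
          = (o : ZMod ℓ) + -(o : ZMod ℓ) * ((q : ZMod ℓ) * (q : ZMod ℓ)⁻¹) := by ring
        _ = 0 := by rw [hqi]; ring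
    exact (ZMod.natCast_eq_zero_iff _ _).mp hcast
  obtain ⟨m, hm⟩ := hdvd
  have hjq : j * q ≤ ℓ * q := Nat.mul_le_mul_right q (le_of_lt hjℓ)
  have hub : (extract x' i₀ Nb).length = Nb := extract_length _ _ _
  have hmc : m * ℓ = ℓ * m := Nat.mul_comm _ _
  have hm1 : o ≤ m * ℓ := by omega
  have hm2 : m * ℓ + ℓ ≤ o + (extract x' i₀ Nb).length := by
    have e2 : 2 * ℓ = ℓ + ℓ := by ring
    omega
  obtain ⟨hmw, hblk⟩ := cover_blocks hℓ hℓpos hz hst m hm1 hm2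
  have hsub : m * ℓ - o = j * q := by omega
  rw [hsub] at hblk
  have hlt2 : ∀ t', t' < ℓ → j * q + t' < Nb := by
    intro t' ht'
    have e2 : 2 * ℓ = ℓ + ℓ := by ring
    omega
  have hfin : ((extract x' i₀ Nb).drop (j * q)).take ℓ = extract x' (i₀ + ((j * q : ℕ) : ℤ)) ℓ := by
    apply List.ext_getElem?
    intro t'
    rw [List.getElem?_take, extract_getElem?]
    by_cases ht' : t' < ℓ
    · rw [if_pos ht', if_pos ht', List.getElem?_drop, extract_getElem?,
          if_pos (hlt2 t' ht')]
      congr 2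
      push_cast; ring
    · rw [if_neg ht', if_neg ht']
  rw [hfin, hvocc j] at hblk
  exact hvnot _ hblk
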